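/- Let H be a symmetric positive definite n×n real matrix, A an n×n real matrix, B an n-dimensional column vector, and ε > 0 a scalar. Then the matrix inequality H(A + εI) + (Aᵀ + εI)H ⪯ -(1/(2ε)) H B Bᵀ H (i.e., the left side minus the right side is negative semidefinite) holds if and only if for all vectors x ∈ ℝⁿ and all scalars f with |f| ≤ 1, one has xᵀH(Ax + Bf) + ε(xᵀHx - 1) ≤ 0. -/

import Mathlib

open Matrix

private lemma xMx_vecMulVec {n : ℕ} (u v x : Fin n → ℝ) :
    x ⬝ᵥ (vecMulVec u v).mulVec x = (x ⬝ᵥ u) * (v ⬝ᵥ x) := by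
  simp [dotProduct, mulVec, vecMulVec_apply, Finset.mul_sum, Finset.sum_mul, mul_assoc]
  rw [Finset.sum_comm]

private lemma symm_dot {n : ℕ} {H : Matrix (Fin n) (Fin n) ℝ} (hH : H.IsSymm) (x y : Fin n → ℝ) :
    x ⬝ᵥ H.mulVec y = y ⬝ᵥ H.mulVec x := by
  rw [dotProduct_mulVec, ← hH.eq, vecMul_transpose, dotProduct_comm, hH.eq]

private lemma key_real (ε q b : ℝ) (hε : 0 < ε)
    (h : ∀ t f : ℝ, |f| ≤ 1 → t ^ 2 * q + t * (f * b) ≤ ε) : b ^ 2 + 4 * ε * q ≤ 0 := by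
  have h' : ∀ t : ℝ, 0 ≤ t → t ^ 2 * q + t * |b| ≤ ε := by
    intro t ht
    rcases le_or_gt 0 b with hb | hb
    · simpa [abs_of_nonneg hb] using h t 1 (by norm_num)
    · have := h t (-1) (by norm_num)
      rw [abs_of_neg hb]; linarith
  rcases lt_or_ge q 0 with hq | hq
  · have hq' : 0 < -q := by linarith
    have ht := h' (|b| / (2 * (-q))) (by positivity)
    set c := -q with hc
    set t := |b| / (2 * c) with htt
    have htc : t * (2 * c) = |b| := div_mul_cancel₀ _ (by positivity)
    have h2 : (t * (2 * c)) ^ 2 = b ^ 2 := by rw [htc, sq_abs]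
    have h3 : t * |b| = t * t * (2 * c) := by rw [← htc]; ring
    have hqc : q = -c := by rw [hc]; ring
    rw [hqc] at ht
    have e1 : c * t ^ 2 ≤ ε := by nlinarith [ht, h3]
    have e2 : b ^ 2 = 4 * c * (c * t ^ 2) := by rw [← h2]; ring
    have e3 : 4 * c * (c * t ^ 2) ≤ 4 * c * ε :=
      mul_le_mul_of_nonneg_left e1 (by positivity)
    rw [hqc]; linarith
  · have hb : b = 0 := by
      by_contra hb
      have hb' : 0 < |b| := abs_pos.mpr hb
      have ht := h' ((ε + 1) / |b|) (by positivity)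
      have h1 : ((ε + 1) / |b|) * |b| = ε + 1 := div_mul_cancel₀ _ (ne_of_gt hb')
      nlinarith [sq_nonneg ((ε + 1) / |b|)]
    have hq0 : q ≤ 0 := by
      by_contra hq'
      push_neg at hq'
      set t := Real.sqrt ((ε + 1) / q) with htdef
      have ht2 : t ^ 2 = (ε + 1) / q := Real.sq_sqrt (by positivity)
      have hle := h' t (Real.sqrt_nonneg _)
      rw [ht2, hb] at hle
      simp only [abs_zero, mul_zero, add_zero] at hle
      rw [div_mul_cancel₀ _ (ne_of_gt hq')] at hle
      linarith
    nlinarith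

/-- Lemma 1: the LMI `H(A+εI) + (Aᵀ+εI)H ⪯ -(1/(2ε)) H B Bᵀ H` is equivalent to the
quadratic constraint `xᵀH(Ax+Bf) + ε(xᵀHx - 1) ≤ 0` for all `x` and all `|f| ≤ 1`. -/
theorem stmt_0 {n : ℕ} (H A : Matrix (Fin n) (Fin n) ℝ) (B : Fin n → ℝ) (ε : ℝ)
    (hε : 0 < ε) (hH : H.IsSymm) (hHpd : H.PosDef) :
    ((-(1 / (2 * ε)) • vecMulVec (H.mulVec B) (H.mulVec B)
        - (H * (A + ε • (1 : Matrix (Fin n) (Fin n) ℝ))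
          + (Aᵀ + ε • (1 : Matrix (Fin n) (Fin n) ℝ)) * H)).PosSemidef)
      ↔ (∀ (x : Fin n → ℝ) (f : ℝ), |f| ≤ 1 →
          x ⬝ᵥ H.mulVec (A.mulVec x + f • B) + ε * (x ⬝ᵥ H.mulVec x - 1) ≤ 0) := by
  set M := (-(1 / (2 * ε)) • vecMulVec (H.mulVec B) (H.mulVec B)
        - (H * (A + ε • (1 : Matrix (Fin n) (Fin n) ℝ))
          + (Aᵀ + ε • (1 : Matrix (Fin n) (Fin n) ℝ)) * H)) with hM
  set q : (Fin n → ℝ) → ℝ := fun x => x ⬝ᵥ H.mulVec (A.mulVec x) + ε * (x ⬝ᵥ H.mulVec x)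
    with hqdef
  set b : (Fin n → ℝ) → ℝ := fun x => x ⬝ᵥ H.mulVec B with hbdef
  have hquad : ∀ x : Fin n → ℝ, x ⬝ᵥ M.mulVec x = -(1 / (2 * ε)) * (b x) ^ 2 - 2 * q x := by
    intro x
    have h1 : x ⬝ᵥ ((Aᵀ + ε • (1 : Matrix (Fin n) (Fin n) ℝ)) * H).mulVec x
        = x ⬝ᵥ H.mulVec (A.mulVec x) + ε * (x ⬝ᵥ H.mulVec x) := by
      rw [← mulVec_mulVec, add_mulVec, smul_mulVec, one_mulVec, dotProduct_add,
        dotProduct_smul, dotProduct_mulVec x Aᵀ, vecMul_transpose,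
        symm_dot hH (A.mulVec x) x]
      simp only [smul_eq_mul]
    have h2 : x ⬝ᵥ (H * (A + ε • (1 : Matrix (Fin n) (Fin n) ℝ))).mulVec x
        = x ⬝ᵥ H.mulVec (A.mulVec x) + ε * (x ⬝ᵥ H.mulVec x) := by
      rw [← mulVec_mulVec, add_mulVec, smul_mulVec, one_mulVec, mulVec_add,
        mulVec_smul, dotProduct_add, dotProduct_smul]
      simp only [smul_eq_mul]
    have h3 : x ⬝ᵥ (vecMulVec (H.mulVec B) (H.mulVec B)).mulVec x = (b x) ^ 2 := by
      rw [xMx_vecMulVec, dotProduct_comm (H.mulVec B) x]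
      ring
    rw [hM, sub_mulVec, add_mulVec, smul_mulVec, dotProduct_sub, dotProduct_add,
      dotProduct_smul, h1, h2, h3]
    simp only [smul_eq_mul, hqdef]
    ring
  have hrhs : ∀ (x : Fin n → ℝ) (f : ℝ),
      x ⬝ᵥ H.mulVec (A.mulVec x + f • B) + ε * (x ⬝ᵥ H.mulVec x - 1)
        = q x + f * b x - ε := by
    intro x f
    rw [mulVec_add, mulVec_smul, dotProduct_add, dotProduct_smul, hqdef, hbdef]
    simp only [smul_eq_mul]
    ring
  constructor
  · intro hpsd x f hf
    have h0 := hpsd.dotProduct_mulVec_nonneg x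
    simp only [RCLike.star_def, star_trivial] at h0
    rw [hquad x] at h0
    rw [hrhs x f]
    have hfb : f * b x ≤ |b x| := by
      calc f * b x ≤ |f * b x| := le_abs_self _
        _ = |f| * |b x| := abs_mul _ _
        _ ≤ 1 * |b x| := by apply mul_le_mul_of_nonneg_right hf (abs_nonneg _)
        _ = |b x| := one_mul _
    have habs : (|b x|) ^ 2 = (b x) ^ 2 := sq_abs _
    have h2e : (0:ℝ) < 2 * ε := by linarith
    have e : -(1 / (2 * ε)) * (b x) ^ 2 = -((b x) ^ 2 / (2 * ε)) := by ring
    rw [e] at h0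
    have hdle : (b x) ^ 2 / (2 * ε) ≤ -(2 * q x) := by linarith
    rw [div_le_iff₀ h2e] at hdle
    have hq2 : (b x) ^ 2 + 4 * ε * q x ≤ 0 := by nlinarith [hdle]
    nlinarith [hq2, hfb, habs, sq_nonneg (|b x| - 2 * ε), abs_nonneg (b x), hε,
      mul_pos hε hε]
  · intro h
    refine posSemidef_iff_dotProduct_mulVec.mpr ⟨?_, ?_⟩
    · rw [hM]
      show _ᴴ = _
      rw [conjTranspose_eq_transpose_of_trivial, transpose_sub, transpose_smul, transpose_add,
        transpose_mul, transpose_mul, transpose_add, transpose_add, transpose_smul,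
        transpose_one, transpose_transpose]
      have hvv : (vecMulVec (H.mulVec B) (H.mulVec B))ᵀ
          = vecMulVec (H.mulVec B) (H.mulVec B) := by
        ext i j
        simp [transpose_apply, vecMulVec_apply, mul_comm]
      rw [hvv, hH.eq, add_comm ((Aᵀ + ε • (1 : Matrix (Fin n) (Fin n) ℝ)) * H)
        (H * (A + ε • (1 : Matrix (Fin n) (Fin n) ℝ)))]
    · intro x
      simp only [RCLike.star_def, star_trivial]
      rw [hquad x]
      have hs : ∀ t f : ℝ, |f| ≤ 1 → t ^ 2 * q x + t * (f * b x) ≤ ε := by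
        intro t f hf
        have hx := h (t • x) f hf
        rw [hrhs (t • x) f] at hx
        have hq' : q (t • x) = t ^ 2 * q x := by
          rw [hqdef]
          simp only [smul_dotProduct, mulVec_smul, dotProduct_smul, smul_eq_mul]
          ring
        have hb' : b (t • x) = t * b x := by
          rw [hbdef]
          simp only [smul_dotProduct, smul_eq_mul]
        rw [hq', hb'] at hx
        linarith
      have hkey := key_real ε (q x) (b x) hε hs
      have h2e : (0:ℝ) < 2 * ε := by linarith
      have hform : -(1 / (2 * ε)) * (b x) ^ 2 - 2 * q x
          = (-((b x) ^ 2) - 4 * ε * q x) / (2 * ε) := by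
        field_simp
        ring
      rw [hform]
      apply div_nonneg _ h2e.le
      linarith
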